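/- Let q be a prime power, F a finite field with q^2 elements, K a subfield of F with q elements, and α an element of F not in K. Let χ be a nontrivial multiplicative character of F (with χ(0)=0) whose restriction to the unit group K* of K is trivial (i.e., χ(t) = 1 for every nonzero t ∈ K). Then the sum over all t ∈ K of χ(t − α) equals −1. -/

import Mathlib

/-- **Katz sum for quadratic extensions, trivial-on-`K*` case.**
Let `q` be a prime power, `F` a finite field with `q^2` elements, `K` a subfield of `F`
with `q` elements, and `α ∈ F \ K`.  If `χ` is a nontrivial multiplicative character of `F`
whose restriction to `K*` is trivial, then `∑_{t ∈ K} χ(t - α) = -1`. -/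
theorem katz_sum_quadratic_trivial
    (q : ℕ) (hq : IsPrimePow q)
    (F : Type*) [Field F] [Fintype F]
    (hF : Fintype.card F = q ^ 2)
    (K : Subfield F) [Fintype ↥K] (hK : Fintype.card ↥K = q)
    (α : F) (hα : α ∉ K)
    (χ : MulChar F ℂ)
    (hχ : ∃ u : F, u ≠ 0 ∧ χ u ≠ 1)
    (hχK : ∀ t : F, t ∈ K → t ≠ 0 → χ t = 1) :
    ∑ t : ↥K, χ ((t : F) - α) = -1 := by
  classical
  have hq2 : 2 ≤ q := hq.two_le
  -- χ is nontrivial as a MulChar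
  have hchi_ne : χ ≠ 1 := by
    rintro rfl
    obtain ⟨u, hu0, hu1⟩ := hχ
    exact hu1 (MulChar.one_apply (isUnit_iff_ne_zero.mpr hu0))
  have hsumF : ∑ x : F, χ x = 0 := MulChar.sum_eq_zero_of_ne_one hchi_ne
  set KF : Finset F := Set.toFinset (K : Set F) with hKF
  have hmem : ∀ x : F, x ∈ KF ↔ x ∈ K := by intro x; simp [hKF]
  have hcardKF : KF.card = q := by
    rw [hKF, Set.toFinset_card, ← hK]
    rfl
  have h0K : (0 : F) ∈ KF := (hmem 0).mpr (zero_mem K)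
  -- the sum in the statement equals a Finset sum over KF
  set S : ℂ := ∑ t ∈ KF, χ (t - α) with hS
  have hSeq : ∑ t : ↥K, χ ((t : F) - α) = S := by
    rw [hS]
    rw [← Finset.sum_coe_sort KF (fun t => χ (t - α))]
    exact Fintype.sum_equiv
      ((Equiv.subtypeEquivRight (fun x => (hmem x).symm)))
      _ _ (fun t => rfl)
  -- sum of χ over K
  have hsumK : ∑ x ∈ KF, χ x = ((q - 1 : ℕ) : ℂ) := by
    rw [← Finset.sum_erase_add KF _ h0K]
    have h1 : ∀ x ∈ KF.erase 0, χ x = 1 := by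
      intro x hx
      exact hχK x ((hmem x).mp (Finset.mem_of_mem_erase hx)) (Finset.ne_of_mem_erase hx)
    rw [Finset.sum_congr rfl h1, Finset.sum_const, Finset.card_erase_of_mem h0K, hcardKF,
      χ.map_zero]
    simp
  -- the product set and the map
  set e : F × F → F := fun p => p.1 * (p.2 - α) with he
  set P : Finset (F × F) := (KF.erase 0) ×ˢ KF with hP
  have hinj : Set.InjOn e P := by
    rintro ⟨c, t⟩ hct ⟨c', t'⟩ hct' heq
    simp only [hP, Finset.mem_coe, Finset.mem_product, Finset.mem_erase] at hct hct'
    obtain ⟨⟨hc0, hcK⟩, htK⟩ := hct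
    obtain ⟨⟨hc0', hcK'⟩, htK'⟩ := hct'
    rw [hmem] at hcK hcK' htK htK'
    simp only [he] at heq
    have hcc : c = c' := by
      by_contra hne
      apply hα
      have h1 : c * t - c' * t' = (c - c') * α := by ring_nf; linear_combination heq
      have h2 : α = (c - c')⁻¹ * (c * t - c' * t') := by
        rw [h1]; field_simp [sub_ne_zero.mpr hne]
      rw [h2]
      exact K.mul_mem (K.inv_mem (K.sub_mem hcK hcK'))
        (K.sub_mem (K.mul_mem hcK htK) (K.mul_mem hcK' htK'))
    subst hcc
    have : t - α = t' - α := by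
      have := mul_left_cancel₀ hc0 heq
      exact this
    rw [sub_left_inj.mp this]
  have himage : P.image e = KFᶜ := by
    apply Finset.eq_of_subset_of_card_le
    · intro x hx
      simp only [Finset.mem_image] at hx
      obtain ⟨⟨c, t⟩, hct, rfl⟩ := hx
      simp only [hP, Finset.mem_product, Finset.mem_erase] at hct
      obtain ⟨⟨hc0, hcK⟩, htK⟩ := hct
      rw [hmem] at hcK htK
      rw [Finset.mem_compl, hmem]
      intro hin
      apply hα
      have hrew : α = t - c⁻¹ * (e (c, t)) := by
        simp only [he]; field_simp; ring
      rw [hrew]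
      exact K.sub_mem htK (K.mul_mem (K.inv_mem hcK) hin)
    · rw [Finset.card_image_of_injOn hinj, hP, Finset.card_product,
        Finset.card_erase_of_mem h0K, hcardKF, Finset.card_compl, hF, hcardKF,
        Nat.sub_mul, one_mul, ← pow_two]
  have hsumC : ∑ x ∈ KFᶜ, χ x = ((q - 1 : ℕ) : ℂ) * S := by
    rw [← himage, Finset.sum_image (fun x hx y hy h => hinj hx hy h), hP,
      Finset.sum_product]
    have hin : ∀ c ∈ KF.erase 0, ∑ t ∈ KF, χ (e (c, t)) = S := by
      intro c hc
      have hc0 : c ≠ 0 := Finset.ne_of_mem_erase hc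
      have hcK : c ∈ K := (hmem c).mp (Finset.mem_of_mem_erase hc)
      have : ∀ t ∈ KF, χ (e (c, t)) = χ (t - α) := by
        intro t _
        simp only [he]
        rw [map_mul, hχK c hcK hc0, one_mul]
      rw [Finset.sum_congr rfl this, hS]
    rw [Finset.sum_congr rfl hin, Finset.sum_const,
      Finset.card_erase_of_mem h0K, hcardKF]
    simp [mul_comm]
  have hsplit : ∑ x ∈ KF, χ x + ∑ x ∈ KFᶜ, χ x = 0 := by
    rw [Finset.sum_add_sum_compl, hsumF]
  rw [hsumK, hsumC] at hsplit
  have hc0 : ((q - 1 : ℕ) : ℂ) ≠ 0 := by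
    have : q - 1 ≠ 0 := by omega
    exact_mod_cast this
  rw [hSeq]
  have hfac : ((q - 1 : ℕ) : ℂ) * (S + 1) = 0 := by ring_nf; linear_combination hsplit
  have := mul_eq_zero.mp hfac
  rcases this with h | h
  · exact absurd h hc0
  · linear_combination h
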